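/- Let L ≥ 2 and n = 3L − 2, and work over ZMod 2. Define the permutation π on {0, …, n−1} by π(i) = L−1−i for 0 ≤ i < L, π(i) = 3L−2−i for L ≤ i < 2L−1, and π(i) = 5L−4−i for 2L−1 ≤ i < 3L−2, with permutation matrix Π over ZMod 2. Define T as the L×(L−1) matrix over ZMod 2 with T_{j,k} = 1 iff k = j or k = j−1, A as the (L−1)×(L−1) path adjacency matrix with A_{k,k+1} = A_{k+1,k} = 1 and all other entries 0, I as the (L−1)×(L−1) identity, and the n×n block matrix K = [[0_L, T, T], [Tᵀ, I, I + A], [Tᵀ, I + A, I]]. Then K is symmetric (Kᵀ = K), π is an involution so Π·Πᵀ = 1, and consequently the 2n×2n block matrix S = [[Π, K·Π], [0, Π]] is symplectic over ZMod 2: S·Ω·Sᵀ = Ω with Ω = [[0, I_n], [−I_n, 0]]. -/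
import Mathlib


open Matrix

/-- The longitudinal-reflection permutation of Eq. (31):
`π(i) = L−1−i` for `0 ≤ i < L`, `π(i) = 3L−2−i` for `L ≤ i < 2L−1`,
and `π(i) = 5L−4−i` for `2L−1 ≤ i < 3L−2`. -/
def piTC (L i : ℕ) : ℕ :=
  if i < L then L - 1 - i
  else if i < 2 * L - 1 then 3 * L - 2 - i
  else 5 * L - 4 - i

/-- The permutation matrix `Π_TC` of `π` over `ZMod 2`, on `n = 3L−2` indices. -/
def PmatTC (L : ℕ) : Matrix (Fin (3 * L - 2)) (Fin (3 * L - 2)) (ZMod 2) :=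
  Matrix.of fun i j => if piTC L (i : ℕ) = (j : ℕ) then 1 else 0

/-- The `L×(L−1)` rung-rail incidence matrix `T`, with `T_{j,k} = 1` iff `k = j`
or `k = j−1` (encoded as `k + 1 = j`). -/
def Tmat (L : ℕ) : Matrix (Fin L) (Fin (L - 1)) (ZMod 2) :=
  Matrix.of fun j k => if (k : ℕ) = (j : ℕ) ∨ (k : ℕ) + 1 = (j : ℕ) then 1 else 0

/-- The `(L−1)×(L−1)` path adjacency matrix `A`, with `A_{k,k+1} = A_{k+1,k} = 1`. -/
def Amat (L : ℕ) : Matrix (Fin (L - 1)) (Fin (L - 1)) (ZMod 2) :=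
  Matrix.of fun k l => if (k : ℕ) + 1 = (l : ℕ) ∨ (l : ℕ) + 1 = (k : ℕ) then 1 else 0

/-- The block row `[T | T]` of `K`. -/
def BTT (L : ℕ) : Matrix (Fin L) (Fin (L - 1) ⊕ Fin (L - 1)) (ZMod 2) :=
  Matrix.of fun i j => Sum.elim (Tmat L i) (Tmat L i) j

/-- `K` in block form `[[0_L, T, T], [Tᵀ, I, I+A], [Tᵀ, I+A, I]]`, on the index
type `Fin L ⊕ (Fin (L−1) ⊕ Fin (L−1))` (rungs, left rail, right rail). -/
def KblkTC (L : ℕ) :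
    Matrix (Fin L ⊕ (Fin (L - 1) ⊕ Fin (L - 1)))
      (Fin L ⊕ (Fin (L - 1) ⊕ Fin (L - 1))) (ZMod 2) :=
  Matrix.fromBlocks 0 (BTT L) (BTT L)ᵀ
    (Matrix.fromBlocks 1 (1 + Amat L) (1 + Amat L) 1)

/-- The identification of the block index type with `Fin (3L−2)`, sending rungs to
indices `[0, L)`, left-rail edges to `[L, 2L−1)` and right-rail edges to `[2L−1, 3L−2)`. -/
def eTC (L : ℕ) : (Fin L ⊕ (Fin (L - 1) ⊕ Fin (L - 1))) ≃ Fin (3 * L - 2) :=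
  ((Equiv.sumCongr (Equiv.refl (Fin L)) finSumFinEquiv).trans finSumFinEquiv).trans
    (finCongr (by omega))

/-- The matrix `K_TC` of Eq. (32), as an `n×n` matrix with `n = 3L−2`. -/
def KTC (L : ℕ) : Matrix (Fin (3 * L - 2)) (Fin (3 * L - 2)) (ZMod 2) :=
  Matrix.reindex (eTC L) (eTC L) (KblkTC L)

/-- The standard symplectic form `Ω = [[0, I_n], [−I_n, 0]]`. -/
def OmegaForm (n : ℕ) : Matrix (Fin n ⊕ Fin n) (Fin n ⊕ Fin n) (ZMod 2) :=
  Matrix.fromBlocks 0 1 (-1) 0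

lemma piTC_invol (L : ℕ) (hL : 2 ≤ L) (i : ℕ) (hi : i < 3 * L - 2) :
    piTC L (piTC L i) = i := by
  simp only [piTC]
  split_ifs <;> omega

lemma piTC_lt (L : ℕ) (hL : 2 ≤ L) (i : ℕ) (hi : i < 3 * L - 2) :
    piTC L i < 3 * L - 2 := by
  simp only [piTC]; split_ifs <;> omega

lemma Pmat_orth (L : ℕ) (hL : 2 ≤ L) : PmatTC L * (PmatTC L)ᵀ = 1 := by
  ext i j
  simp only [Matrix.mul_apply, Matrix.transpose_apply, PmatTC, Matrix.of_apply]
  rw [Finset.sum_eq_single (⟨piTC L (i : ℕ), piTC_lt L hL i i.isLt⟩ : Fin (3 * L - 2))]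
  · by_cases h : (i : Fin (3 * L - 2)) = j
    · subst h; simp [Matrix.one_apply]
    · have h1 : ¬ piTC L (j : ℕ) = piTC L (i : ℕ) := by
        intro he
        apply h
        have := congrArg (piTC L) he
        rw [piTC_invol L hL i i.isLt, piTC_invol L hL j j.isLt] at this
        exact Fin.ext this.symm
      rw [if_pos rfl, one_mul, if_neg h1, Matrix.one_apply_ne h]
  · intro k _ hk
    have : ¬ piTC L (i : ℕ) = (k : ℕ) := fun he => hk (Fin.ext he.symm)
    simp [this]
  · simp

lemma KTC_symm (L : ℕ) : (KTC L)ᵀ = KTC L := by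
  have hA : (Amat L)ᵀ = Amat L := by
    ext k l; simp only [Matrix.transpose_apply, Amat, Matrix.of_apply, or_comm]
  have hblk : (KblkTC L)ᵀ = KblkTC L := by
    simp [KblkTC, Matrix.fromBlocks_transpose, Matrix.transpose_add, hA]
  rw [KTC, Matrix.transpose_reindex, hblk]

/-- Eqs. (29)–(32) of the paper: for the open `2×L` Toric-code ladder with
`n = 3L−2` edge qubits, `K_TC` is symmetric, `π_TC` is an involution (so
`Π_TC·Π_TCᵀ = 1`), and consequently `S_TC = [[Π_TC, K_TC·Π_TC], [0, Π_TC]]`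
is symplectic over `ZMod 2`. -/
theorem toric_ladder_symmetry_symplectic (L : ℕ) (hL : 2 ≤ L) :
    (KTC L)ᵀ = KTC L
    ∧ (∀ i : Fin (3 * L - 2), piTC L (piTC L (i : ℕ)) = (i : ℕ))
    ∧ PmatTC L * (PmatTC L)ᵀ = 1
    ∧ Matrix.fromBlocks (PmatTC L) (KTC L * PmatTC L) 0 (PmatTC L) *
          OmegaForm (3 * L - 2) *
          (Matrix.fromBlocks (PmatTC L) (KTC L * PmatTC L) 0 (PmatTC L))ᵀ
        = OmegaForm (3 * L - 2) := by
  have hK := KTC_symm L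
  have hP := Pmat_orth L hL
  refine ⟨hK, fun i => piTC_invol L hL i i.isLt, hP, ?_⟩
  have h1 : KTC L * PmatTC L * (PmatTC L)ᵀ = KTC L := by
    rw [Matrix.mul_assoc, hP, Matrix.mul_one]
  have h2 : PmatTC L * ((PmatTC L)ᵀ * KTC L) = KTC L := by
    rw [← Matrix.mul_assoc, hP, Matrix.one_mul]
  rw [OmegaForm, Matrix.fromBlocks_transpose, Matrix.fromBlocks_multiply,
    Matrix.fromBlocks_multiply]
  simp [Matrix.transpose_mul, hK, h1, h2, hP]
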